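/- Let V be a real topological vector space, ω a nondegenerate alternating bilinear form on V (i.e. for every v ≠ 0 there is w with ω(v,w) ≠ 0), and D : V → V a linear map with ω(Dv,w) = −ω(v,Dw) for all v,w ∈ V. Let α be a linear functional on V, let x ∈ V, let z, t*, z*, t ∈ ℝ with z*·t > 0, and let U be a neighborhood of 0 in V such that for every x′ ∈ x + U the function v ↦ z*z + α(x′) − z*·ω(v,x′) + t·t* + t·α(Dv) + (t·z*/2)·ω(Dv,v) is bounded from below on V. Then ω(Dv,v) > 0 for every v ≠ 0, i.e. the symmetric bilinear form Q(v,w) := ω(Dv,w) is positive definite. -/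

import Mathlib

lemma quad_bdd_aux {A B C : ℝ}
    (h : BddBelow (Set.range fun s : ℝ => C * s ^ 2 + B * s + A)) :
    0 ≤ C ∧ (C = 0 → B = 0) := by
  obtain ⟨m, hm⟩ := h
  have hm' : ∀ s : ℝ, m ≤ C * s ^ 2 + B * s + A := fun s =>
    hm (Set.mem_range_self s)
  constructor
  · by_contra hC
    push_neg at hC
    set s₀ : ℝ := Real.sqrt ((m - A) / C) + 1 with hs₀
    have hsq : (m - A) / C < s₀ ^ 2 := by
      have h1 := Real.sqrt_nonneg ((m - A) / C)
      rcases le_or_gt 0 ((m - A) / C) with h0 | h0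
      · nlinarith [Real.sq_sqrt h0]
      · nlinarith
    have hCs : C * s₀ ^ 2 < m - A := by
      have := (div_lt_iff_of_neg hC).mp hsq
      linarith
    have h1 := hm' s₀
    have h2 := hm' (-s₀)
    nlinarith
  · intro hC
    by_contra hB
    have h1 := hm' ((m - A - 1) / B)
    rw [hC] at h1
    field_simp at h1
    rw [zero_mul, zero_add, ← add_mul, mul_div_assoc, div_self (pow_ne_zero 2 hB)] at h1
    nlinarith [sq_abs B, abs_pos.mpr hB]
/-- Let `ω` be a nondegenerate alternating bilinear form on a real topological
vector space `V` and `D` a linear map with `ω(Dv,w) = -ω(v,Dw)`. If, for some real numbers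
`z, t*, z*, t` with `z*·t > 0`, a linear functional `α`, a point `x` and a neighborhood `U` of
`0`, the quadratic functions
`v ↦ z*z + α(x') - z*·ω(v,x') + t·t* + t·α(Dv) + (t·z*/2)·ω(Dv,v)` are bounded from below for
every `x' ∈ x + U`, then `Q(v,w) := ω(Dv,w)` is positive definite. -/
theorem Q_positive_definite_of_bddBelow
    {V : Type*} [AddCommGroup V] [Module ℝ V] [TopologicalSpace V]
    [IsTopologicalAddGroup V] [ContinuousSMul ℝ V]
    (ω : V →ₗ[ℝ] V →ₗ[ℝ] ℝ) (halt : ∀ v : V, ω v v = 0)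
    (hnd : ∀ v : V, (∀ w : V, ω v w = 0) → v = 0)
    (D : V →ₗ[ℝ] V) (hskew : ∀ v w : V, ω (D v) w = -ω v (D w))
    (α : V →ₗ[ℝ] ℝ) (x : V) (z tstar zstar t : ℝ) (hzt : zstar * t > 0)
    (U : Set V) (hU : U ∈ nhds (0 : V))
    (hbdd : ∀ u ∈ U, BddBelow (Set.range fun v : V =>
      zstar * z + α (x + u) - zstar * ω v (x + u) + t * tstar + t * α (D v)
        + (t * zstar / 2) * ω (D v) v)) :
    ∀ v : V, v ≠ 0 → 0 < ω (D v) v := by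
  -- key: for each u ∈ U and v, the restriction to the line s • v is a bounded-below quadratic
  have key : ∀ u ∈ U, ∀ v : V,
      0 ≤ (t * zstar / 2) * ω (D v) v ∧
      ((t * zstar / 2) * ω (D v) v = 0 →
        -zstar * ω v (x + u) + t * α (D v) = 0) := by
    intro u hu v
    apply quad_bdd_aux (A := zstar * z + α (x + u) + t * tstar)
      (B := -zstar * ω v (x + u) + t * α (D v))
      (C := (t * zstar / 2) * ω (D v) v)
    obtain ⟨m, hm⟩ := hbdd u hu
    refine ⟨m, ?_⟩
    rintro y ⟨s, rfl⟩
    have := hm (Set.mem_range_self (s • v))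
    simp only [map_smul, LinearMap.smul_apply, smul_eq_mul] at this
    ring_nf at this ⊢
    linarith
  have hU0 : (0 : V) ∈ U := mem_of_mem_nhds hU
  intro v hv
  have h0 := key 0 hU0 v
  have htz : 0 < t * zstar / 2 := by nlinarith
  rcases lt_or_eq_of_le h0.1 with hpos | heq
  · nlinarith
  · -- equality case: ω (D v) v = 0, derive a contradiction
    exfalso
    have hQ : ω (D v) v = 0 := by
      rcases mul_eq_zero.mp heq.symm with h | h
      · exact absurd h (ne_of_gt htz)
      · exact h
    have hB : ∀ u ∈ U, -zstar * ω v (x + u) + t * α (D v) = 0 := by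
      intro u hu
      exact (key u hu v).2 (by rw [hQ, mul_zero])
    have hB0 := hB 0 hU0
    have hzstar : zstar ≠ 0 := by rintro rfl; simp at hzt
    have hωu : ∀ u ∈ U, ω v u = 0 := by
      intro u hu
      have h1 := hB u hu
      simp only [map_add, map_zero, add_zero] at h1 hB0
      have : zstar * ω v u = 0 := by linarith
      exact (mul_eq_zero.mp this).resolve_left hzstar
    have hω : ∀ w : V, ω v w = 0 := by
      intro w
      have hT : Filter.Tendsto (fun c : ℝ => c • w) (nhds 0) (nhds (0 : V)) := by
        have := (Filter.tendsto_id (x := nhds (0 : ℝ))).smul_const w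
        simpa using this
      have hS : {c : ℝ | c • w ∈ U} ∈ nhds (0 : ℝ) := hT hU
      obtain ⟨ε, hε, hball⟩ := Metric.mem_nhds_iff.mp hS
      have hcU : (ε / 2) • w ∈ U := hball (by
        simp only [Metric.mem_ball, Real.dist_eq, sub_zero, abs_div, abs_of_pos hε, abs_two]
        linarith)
      have := hωu _ hcU
      rw [map_smul, smul_eq_mul] at this
      rcases mul_eq_zero.mp this with h | h
      · exact absurd h (ne_of_gt (half_pos hε))
      · exact h
    exact hv (hnd v hω)
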